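/- (Theorem 1, Integral 1.) Let m ≥ 1, n ≥ 0. Suppose: (i) L_{(N)i₁...i_m}(q), N = 0,…,n, are smooth m-th order generalized Killing tensors of Γ; (ii) if m > 1 and n > 0, L_{(k)i₁...i_m} = −(1/k) L_{(k−1)(i₁...i_{m−1}|i_m)} for k = 1,…,n; (iii) if m > 1, L_{(n)i₁...i_{m−1}} is an (m−1)-th order generalized Killing tensor; (iv) L_{(n)a}Q^a = s₀ is a constant; (v) G(q) is smooth with G_{,i₁} = 2L_{(0)i₁i₂}Q^{i₂} − L_{(1)i₁}, where the first term on the right is present only if m > 1 and the second only if n > 0; (vi) if n > 0, for k = 1,…,n: (L_{(k−1)c}Q^c)_{,i₁} = 2k L_{(k)i₁i₂}Q^{i₂} − k(k+1) L_{(k+1)i₁}, the first term present only if m > 1 and the second only if k < n; (vii) if m > 2, for k = 0,…,n and r = 2,…,m−1: L_{(k)(i₁...i_{r−1}|i_r)} = (r+1) L_{(k)i₁...i_r i_{r+1}} Q^{i_{r+1}} − (k+1) L_{(k+1)i₁...i_r}, the last term present only if k < n. Then I = Σ_{r=1}^{m} (Σ_{N=0}^{n} L_{(N)i₁...i_r}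 t^N) q̇^{i₁}⋯q̇^{i_r} + s₀ t^{n+1}/(n+1) + Σ_{N=1}^{n} (L_{(N−1)c}Q^c) t^N/N + G(q) is a first integral of q̈^a = −Γ^a_{bc}q̇^bq̇^c − Q^a. -/

import Mathlib

noncomputable section
open scoped BigOperators

/-- Points of the configuration space `ℝ^D`. -/
abbrev Vec (D : ℕ) := Fin D → ℝ

/-- Connection coefficients: `Conn D Γ` with `Γ q a b c = Γ^a_{bc}(q)`. -/
abbrev Conn (D : ℕ) := Vec D → Fin D → Fin D → Fin D → ℝ

/-- Totally covariant `r`-tensor fields on `ℝ^D`. -/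
abbrev Tens (D r : ℕ) := Vec D → (Fin r → Fin D) → ℝ

/-- Partial derivative `∂f/∂q^j`. -/
def pd {D : ℕ} (j : Fin D) (f : Vec D → ℝ) (q : Vec D) : ℝ :=
  fderiv ℝ f q (Pi.single j 1)

/-- Covariant derivative `T_{i₁...i_r|j}` (the last slot is the derivative index `j`):
`T_{i₁...i_r|j} = ∂T_{i₁...i_r}/∂q^j − Σ_k Γ^s_{i_k j} T_{i₁...s...i_r}`. -/
def covTens {D r : ℕ} (Γ : Conn D) (T : Tens D r) : Tens D (r + 1) :=
  fun q idx =>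
    pd (idx (Fin.last r)) (fun p => T p fun k => idx k.castSucc) q
      - ∑ k : Fin r, ∑ s : Fin D,
          Γ q s (idx k.castSucc) (idx (Fin.last r)) *
            T q (Function.update (fun l => idx l.castSucc) k s)

/-- Symmetrization of a tensor over all of its indices. -/
def symT {D r : ℕ} (T : Tens D r) : Tens D r :=
  fun q idx => (r.factorial : ℝ)⁻¹ * ∑ σ : Equiv.Perm (Fin r), T q (idx ∘ σ)

/-- Totally symmetric tensor field. -/
def IsSymTens {D r : ℕ} (T : Tens D r) : Prop :=
  ∀ (q : Vec D) (idx : Fin r → Fin D) (σ : Equiv.Perm (Fin r)), T q (idx ∘ σ) = T q idx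

/-- Smooth tensor field. -/
def SmoothTens {D r : ℕ} (T : Tens D r) : Prop :=
  ∀ idx : Fin r → Fin D, ContDiff ℝ (⊤ : ℕ∞) fun q => T q idx

/-- Generalized Killing tensor of order `r` for the connection `Γ`:
`T_{(i₁...i_r|i_{r+1})} = 0`. -/
def IsGenKT {D r : ℕ} (Γ : Conn D) (T : Tens D r) : Prop :=
  ∀ q idx, symT (covTens Γ T) q idx = 0

/-- `q, v` solve `q̈^a = -Γ^a_{bc}(q) q̇^b q̇^c - Q^a(q)` on the set `s ⊆ ℝ`. -/
def IsSolutionOn {D : ℕ} (Γ : Conn D) (Q : Vec D → Fin D → ℝ)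
    (s : Set ℝ) (q v : ℝ → Vec D) : Prop :=
  ∀ t ∈ s, ∀ a : Fin D,
    HasDerivAt (fun τ => q τ a) (v t a) t ∧
    HasDerivAt (fun τ => v τ a)
      (-(∑ b, ∑ c, Γ (q t) a b c * v t b * v t c) - Q (q t) a) t

/-- `I(t,q,q̇)` is a first integral of the system: it is constant along every
(C²) solution defined on an open interval. -/
def FirstIntegral {D : ℕ} (Γ : Conn D) (Q : Vec D → Fin D → ℝ)
    (I : ℝ → Vec D → Vec D → ℝ) : Prop :=
  ∀ (a b : ℝ) (q v : ℝ → Vec D), IsSolutionOn Γ Q (Set.Ioo a b) q v →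
    ∀ t₁ ∈ Set.Ioo a b, ∀ t₂ ∈ Set.Ioo a b,
      I t₁ (q t₁) (v t₁) = I t₂ (q t₂) (v t₂)

/-- The contraction `L_c Q^c` of a rank-1 tensor with the generalized forces. -/
def dotQ {D : ℕ} (L : Tens D 1) (Q : Vec D → Fin D → ℝ) (q : Vec D) : ℝ :=
  ∑ c, L q (fun _ => c) * Q q c

section Helpers
variable {D : ℕ}

lemma contDiff_one_of_top {f : Vec D → ℝ} (h : ContDiff ℝ (⊤ : ℕ∞) f) :
    Differentiable ℝ f := h.differentiable (by simp)

/-- Chain rule: derivative of `g ∘ q` in terms of partial derivatives. -/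
lemma hasDerivAt_comp_vec (g : Vec D → ℝ) (hg : ContDiff ℝ (⊤ : ℕ∞) g)
    {q : ℝ → Vec D} {t : ℝ} {V : Fin D → ℝ}
    (hq : ∀ a, HasDerivAt (fun τ => q τ a) (V a) t) :
    HasDerivAt (fun τ => g (q τ)) (∑ j, pd j g (q t) * V j) t := by
  have hq' : HasDerivAt q V t := hasDerivAt_pi.2 hq
  have hgd := (contDiff_one_of_top hg (q t)).hasFDerivAt
  have h := hgd.comp_hasDerivAt t hq'
  have hV : fderiv ℝ g (q t) V = ∑ j, pd j g (q t) * V j := by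
    have hVrep : V = ∑ j, V j • (Pi.single j (1 : ℝ) : Vec D) := by
      funext i
      simp [Pi.single_apply, Finset.sum_apply]
    conv_lhs => rw [hVrep]
    rw [map_sum]
    refine Finset.sum_congr rfl fun j _ => ?_
    rw [map_smul, smul_eq_mul, mul_comm]
    rfl
  rwa [hV] at h

end Helpers

section Helpers2
variable {D : ℕ}

/-- Reindexing a sum over `Fin (r+1) → Fin D` via `Fin.snoc`. -/
lemma sum_snoc {r : ℕ} (g : (Fin (r + 1) → Fin D) → ℝ) :
    ∑ idx : Fin (r + 1) → Fin D, g idx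
      = ∑ base : Fin r → Fin D, ∑ c : Fin D, g (Fin.snoc base c) := by
  have hbij : Function.Bijective
      (fun p : (Fin r → Fin D) × Fin D => (Fin.snoc p.1 p.2 : Fin (r + 1) → Fin D)) := by
    constructor
    · intro p p' h
      have h1 : p.1 = p'.1 := by
        funext i
        have := congrFun h i.castSucc
        simpa using this
      have h2 : p.2 = p'.2 := by
        have := congrFun h (Fin.last r)
        simpa using this
      exact Prod.ext h1 h2
    · intro f
      exact ⟨(Fin.init f, f (Fin.last r)), by simp⟩
  have h2 : ∑ p : (Fin r → Fin D) × Fin D, g (Fin.snoc p.1 p.2)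
      = ∑ base : Fin r → Fin D, ∑ c : Fin D, g (Fin.snoc base c) := by
    rw [Fintype.sum_prod_type]
  rw [← h2]
  exact (Fintype.sum_bijective _ hbij (fun p => g (Fin.snoc p.1 p.2)) g fun p => rfl).symm

/-- Reindexing a sum over `Fin (r+1) → Fin D` via `Fin.insertNth` at position `k`. -/
lemma sum_insertNth {r : ℕ} (k : Fin (r + 1)) (g : (Fin (r + 1) → Fin D) → ℝ) :
    ∑ idx : Fin (r + 1) → Fin D, g idx
      = ∑ base : Fin r → Fin D, ∑ c : Fin D, g (Fin.insertNth k c base) := by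
  have hbij : Function.Bijective
      (fun p : (Fin r → Fin D) × Fin D => (Fin.insertNth k p.2 p.1 : Fin (r + 1) → Fin D)) := by
    constructor
    · intro p p' h
      have h1 : p.1 = p'.1 := by
        funext i
        have := congrFun h (k.succAbove i)
        simpa using this
      have h2 : p.2 = p'.2 := by
        have := congrFun h k
        simpa using this
      exact Prod.ext h1 h2
    · intro f
      refine ⟨(fun i => f (k.succAbove i), f k), ?_⟩
      simp only
      rw [Fin.insertNth_eq_iff]
      exact ⟨rfl, by funext i; simp [Fin.removeNth]⟩
  have h2 : ∑ p : (Fin r → Fin D) × Fin D, g (Fin.insertNth k p.2 p.1)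
      = ∑ base : Fin r → Fin D, ∑ c : Fin D, g (Fin.insertNth k c base) := by
    rw [Fintype.sum_prod_type]
  rw [← h2]
  exact (Fintype.sum_bijective _ hbij (fun p => g (Fin.insertNth k p.2 p.1)) g fun p => rfl).symm

/-- Product over `univ.erase k` in terms of `succAbove`. -/
lemma prod_erase_succAbove {r : ℕ} (k : Fin (r + 1)) (f : Fin (r + 1) → ℝ) :
    ∏ l ∈ Finset.univ.erase k, f l = ∏ i : Fin r, f (k.succAbove i) := by
  rw [Fin.univ_succAbove _ k, Finset.erase_cons, Finset.prod_map]
  rfl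

/-- Involutive reindexing `(f, s) ↦ (update f k s, f k)` of a double sum. -/
lemma sum_update_swap {r : ℕ} (k : Fin r) (h : (Fin r → Fin D) → Fin D → ℝ) :
    ∑ f : Fin r → Fin D, ∑ s : Fin D, h f s
      = ∑ f : Fin r → Fin D, ∑ s : Fin D, h (Function.update f k s) (f k) := by
  have hinv : Function.Involutive
      (fun p : (Fin r → Fin D) × Fin D => ((Function.update p.1 k p.2, p.1 k) :
        (Fin r → Fin D) × Fin D)) := by
    intro p
    simp [Function.update_idem]
  have h0 : ∑ p : (Fin r → Fin D) × Fin D, h p.1 p.2 = ∑ f : Fin r → Fin D, ∑ s, h f s := by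
    rw [Fintype.sum_prod_type]
  have h1 : ∑ p : (Fin r → Fin D) × Fin D, h (Function.update p.1 k p.2) (p.1 k)
      = ∑ f : Fin r → Fin D, ∑ s, h (Function.update f k s) (f k) := by
    rw [Fintype.sum_prod_type]
  rw [← h0, ← h1]
  exact (Fintype.sum_bijective _ hinv.bijective
    (fun p => h (Function.update p.1 k p.2) (p.1 k)) (fun p => h p.1 p.2) fun p => rfl).symm

end Helpers2

section Helpers3
variable {D : ℕ}

/-- Contracting with a symmetric product of velocities lets us symmetrize the tensor. -/
lemma sum_symT_contract {ρ : ℕ} (T : Tens D ρ) (q : Vec D) (V : Fin D → ℝ) :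
    ∑ idx : Fin ρ → Fin D, symT T q idx * ∏ k, V (idx k)
      = ∑ idx : Fin ρ → Fin D, T q idx * ∏ k, V (idx k) := by
  unfold symT
  have key : ∀ σ : Equiv.Perm (Fin ρ),
      ∑ idx : Fin ρ → Fin D, T q (idx ∘ σ) * ∏ k, V (idx k)
        = ∑ idx : Fin ρ → Fin D, T q idx * ∏ k, V (idx k) := by
    intro σ
    have e : (Fin ρ → Fin D) ≃ (Fin ρ → Fin D) :=
      Equiv.arrowCongr σ.symm (Equiv.refl (Fin D))
    have hbij : Function.Bijective (fun idx : Fin ρ → Fin D => idx ∘ σ) := by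
      constructor
      · intro f f' h
        funext i
        have := congrFun h (σ.symm i)
        simpa using this
      · intro f
        exact ⟨f ∘ σ.symm, by funext i; simp⟩
    refine Fintype.sum_bijective _ hbij _ _ fun idx => ?_
    congr 1
    exact (Equiv.prod_comp σ fun k => V (idx k)).symm
  calc ∑ idx : Fin ρ → Fin D, ((ρ.factorial : ℝ)⁻¹ * ∑ σ : Equiv.Perm (Fin ρ), T q (idx ∘ σ))
        * ∏ k, V (idx k)
      = ∑ idx : Fin ρ → Fin D, ∑ σ : Equiv.Perm (Fin ρ),
          (ρ.factorial : ℝ)⁻¹ * (T q (idx ∘ σ) * ∏ k, V (idx k)) := by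
        refine Finset.sum_congr rfl fun idx _ => ?_
        rw [Finset.mul_sum, Finset.sum_mul]
        exact Finset.sum_congr rfl fun σ _ => (mul_assoc _ _ _)
    _ = ∑ σ : Equiv.Perm (Fin ρ), ∑ idx : Fin ρ → Fin D,
          (ρ.factorial : ℝ)⁻¹ * (T q (idx ∘ σ) * ∏ k, V (idx k)) := Finset.sum_comm
    _ = ∑ σ : Equiv.Perm (Fin ρ), (ρ.factorial : ℝ)⁻¹ *
          ∑ idx : Fin ρ → Fin D, T q (idx ∘ σ) * ∏ k, V (idx k) := by
        exact Finset.sum_congr rfl fun σ _ => (Finset.mul_sum _ _ _).symm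
    _ = ∑ σ : Equiv.Perm (Fin ρ), (ρ.factorial : ℝ)⁻¹ *
          ∑ idx : Fin ρ → Fin D, T q idx * ∏ k, V (idx k) := by
        exact Finset.sum_congr rfl fun σ _ => by rw [key σ]
    _ = ∑ idx : Fin ρ → Fin D, T q idx * ∏ k, V (idx k) := by
        rw [Finset.sum_const, Finset.card_univ, Fintype.card_perm, Fintype.card_fin,
          nsmul_eq_mul, ← mul_assoc, mul_inv_cancel₀, one_mul]
        exact_mod_cast Nat.factorial_ne_zero ρ

/-- Covariant derivative evaluated on a `snoc` index tuple. -/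
lemma covTens_snoc {r : ℕ} (Γ : Conn D) (T : Tens D r) (q : Vec D)
    (base : Fin r → Fin D) (c : Fin D) :
    covTens Γ T q (Fin.snoc base c)
      = pd c (fun p => T p base) q
        - ∑ k, ∑ s, Γ q s (base k) c * T q (Function.update base k s) := by
  unfold covTens
  simp [Fin.snoc_castSucc, Fin.snoc_last]

/-- For a symmetric tensor, `insertNth` can be replaced by `snoc`. -/
lemma symm_insertNth {r : ℕ} {T : Tens D (r + 1)} (hT : IsSymTens T) (q : Vec D)
    (k : Fin (r + 1)) (c : Fin D) (base : Fin r → Fin D) :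
    T q (Fin.insertNth k c base) = T q (Fin.snoc base c) := by
  have e1 := finSuccEquiv' k
  set σ : Equiv.Perm (Fin (r + 1)) :=
    (finSuccEquiv' (Fin.last r)).trans (finSuccEquiv' k).symm with hσ
  have hcomp : (Fin.insertNth k c base) ∘ σ = Fin.snoc base c := by
    funext i
    refine Fin.lastCases ?_ (fun j => ?_) i
    · simp [hσ, Function.comp, finSuccEquiv'_at, finSuccEquiv'_symm_none]
    · simp only [hσ, Function.comp, Equiv.trans_apply, Fin.snoc_castSucc]
      rw [← Fin.succAbove_last, finSuccEquiv'_succAbove, finSuccEquiv'_symm_some,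
        Fin.insertNth_apply_succAbove]
  rw [← hcomp]
  exact (hT q _ σ).symm

/-- Sum over functions `Fin 1 → Fin D`. -/
lemma sum_fun_one (g : (Fin 1 → Fin D) → ℝ) :
    ∑ idx : Fin 1 → Fin D, g idx = ∑ i : Fin D, g (fun _ => i) := by
  refine (Fintype.sum_bijective (fun i : Fin D => (fun _ => i : Fin 1 → Fin D)) ?_ _ g
    fun i => rfl).symm
  constructor
  · intro i i' h
    exact congrFun h 0
  · intro f
    exact ⟨f 0, by funext j; rw [Subsingleton.elim j 0]⟩

/-- Sum over functions `Fin 0 → Fin D`. -/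
lemma sum_fun_zero (g : (Fin 0 → Fin D) → ℝ) :
    ∑ idx : Fin 0 → Fin D, g idx = g Fin.elim0 := by
  rw [Fintype.sum_subsingleton g Fin.elim0]

end Helpers3

section Helpers4
variable {D : ℕ}

lemma prod_comp_update {r : ℕ} (V : Fin D → ℝ) (f : Fin r → Fin D) (k : Fin r) (s : Fin D) :
    ∏ l, V (Function.update f k s l) = V s * ∏ l ∈ Finset.univ.erase k, V (f l) := by
  have h : (fun l => V (Function.update f k s l)) = Function.update (fun l => V (f l)) k (V s) := by
    funext l
    rcases eq_or_ne l k with rfl | hl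
    · simp
    · simp [Function.update_apply, hl]
  rw [h]
  rw [Finset.prod_update_of_mem (Finset.mem_univ k) (fun l => V (f l)) (V s),
    Finset.sdiff_singleton_eq_erase]

lemma prod_snoc {r : ℕ} (V : Fin D → ℝ) (base : Fin r → Fin D) (c : Fin D) :
    ∏ k : Fin (r + 1), V ((Fin.snoc base c : Fin (r + 1) → Fin D) k)
      = (∏ k : Fin r, V (base k)) * V c := by
  rw [Fin.prod_univ_castSucc (f := fun k => V ((Fin.snoc base c : Fin (r + 1) → Fin D) k))]
  simp

lemma sum_range_shift2 (f : ℕ → ℝ) (m : ℕ) :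
    ∑ r ∈ Finset.range m, f (r + 2) + f 0 + f 1
      = ∑ r ∈ Finset.range m, f r + f m + f (m + 1) := by
  have h1 : ∑ r ∈ Finset.range (m + 2), f r
      = ∑ r ∈ Finset.range m, f (r + 2) + f 0 + f 1 := by
    rw [Finset.sum_range_succ' f (m + 1), Finset.sum_range_succ' (fun i => f (i + 1)) m]
    ring
  have h2 : ∑ r ∈ Finset.range (m + 2), f r
      = ∑ r ∈ Finset.range m, f r + f m + f (m + 1) := by
    rw [Finset.sum_range_succ, Finset.sum_range_succ]
  rw [← h1, h2]

lemma snoc_pair {i j : Fin D} : (Fin.snoc (fun _ => i) j : Fin 2 → Fin D) = ![i, j] := by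
  funext k
  refine Fin.lastCases ?_ (fun l => ?_) k
  · simp [Fin.snoc_last]
    rfl
  · have hl : l = 0 := Subsingleton.elim _ _
    subst hl
    simp [Fin.snoc_castSucc]

lemma snoc_zero {j : Fin D} : (Fin.snoc Fin.elim0 j : Fin 1 → Fin D) = fun _ => j := by
  funext i
  have : i = Fin.last 0 := by
    ext
    omega
  rw [this, Fin.snoc_last]

end Helpers4

section Helpers5
variable {D : ℕ}

/-- Pull a polynomial coefficient out of a contraction sum. -/
lemma sum_coeff_swap {α : Type*} [Fintype α] (s : Finset ℕ) (f : ℕ → α → ℝ) (c : ℕ → ℝ)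
    (g : α → ℝ) :
    ∑ x : α, (∑ N ∈ s, f N x * c N) * g x = ∑ N ∈ s, c N * ∑ x : α, f N x * g x := by
  calc ∑ x : α, (∑ N ∈ s, f N x * c N) * g x
      = ∑ x : α, ∑ N ∈ s, c N * (f N x * g x) := by
        refine Finset.sum_congr rfl fun x _ => ?_
        rw [Finset.sum_mul]
        exact Finset.sum_congr rfl fun N _ => by ring
    _ = ∑ N ∈ s, ∑ x : α, c N * (f N x * g x) := Finset.sum_comm
    _ = ∑ N ∈ s, c N * ∑ x : α, f N x * g x :=
        Finset.sum_congr rfl fun N _ => (Finset.mul_sum _ _ _).symm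

/-- Index shift for the time-derivative of the polynomial coefficients. -/
lemma sum_shift_pow (n : ℕ) (t : ℝ) (c : ℕ → ℝ) (hc : c (n + 1) = 0) :
    ∑ N ∈ Finset.range (n + 1), (↑N * t ^ (N - 1)) * c N
      = ∑ N ∈ Finset.range (n + 1), t ^ N * ((N + 1 : ℕ) : ℝ) * c (N + 1) := by
  rw [Finset.sum_range_succ' (fun N => (↑N * t ^ (N - 1)) * c N) n,
    Finset.sum_range_succ (fun N => t ^ N * ((N + 1 : ℕ) : ℝ) * c (N + 1)) n]
  rw [hc]
  simp only [Nat.cast_zero, zero_mul, add_zero, mul_zero]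
  refine Finset.sum_congr rfl fun N _ => ?_
  have h1 : N + 1 - 1 = N := rfl
  rw [h1]
  push_cast
  ring

/-- Contraction of a symmetric tensor against `Q` in one slot. -/
lemma contractQ {r : ℕ} (T : Tens D (r + 1)) (hT : IsSymTens T) (P : Vec D)
    (Qf V : Fin D → ℝ) :
    ∑ idx : Fin (r + 1) → Fin D, ∑ k : Fin (r + 1),
        T P idx * ((∏ l ∈ Finset.univ.erase k, V (idx l)) * Qf (idx k))
      = ((r + 1 : ℕ) : ℝ) * ∑ base : Fin r → Fin D,
          (∑ c, T P (Fin.snoc base c) * Qf c) * ∏ i, V (base i) := by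
  rw [Finset.sum_comm]
  have hk : ∀ k : Fin (r + 1),
      ∑ idx : Fin (r + 1) → Fin D,
          T P idx * ((∏ l ∈ Finset.univ.erase k, V (idx l)) * Qf (idx k))
        = ∑ base : Fin r → Fin D, (∑ c, T P (Fin.snoc base c) * Qf c) * ∏ i, V (base i) := by
    intro k
    rw [sum_insertNth k]
    refine Finset.sum_congr rfl fun base _ => ?_
    rw [Finset.sum_mul]
    refine Finset.sum_congr rfl fun c _ => ?_
    rw [symm_insertNth hT P k c base, prod_erase_succAbove, Fin.insertNth_apply_same]
    have hpe : ∀ i : Fin r,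
        V ((Fin.insertNth k c base : Fin (r + 1) → Fin D) (k.succAbove i)) = V (base i) :=
      fun i => by rw [Fin.insertNth_apply_succAbove]
    rw [Finset.prod_congr rfl fun i _ => hpe i]
    ring
  rw [Finset.sum_congr rfl fun k _ => hk k, Finset.sum_const, Finset.card_univ,
    Fintype.card_fin, nsmul_eq_mul]

/-- The contraction of the covariant derivative with `r+2` velocities, reorganized. -/
lemma covSum_eq {r : ℕ} (Γ : Conn D) (T : Tens D (r + 1)) (hT : IsSymTens T)
    (P : Vec D) (V : Fin D → ℝ) :
    ∑ idx : Fin (r + 2) → Fin D, covTens Γ T P idx * ∏ k : Fin (r + 2), V (idx k)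
      = (∑ base : Fin (r + 1) → Fin D,
          (∑ c, pd c (fun p => T p base) P * V c) * ∏ k, V (base k))
        - ∑ base : Fin (r + 1) → Fin D, ∑ k : Fin (r + 1),
            T P base * ((∏ l ∈ Finset.univ.erase k, V (base l)) *
              (∑ s, ∑ c, Γ P (base k) s c * V s * V c)) := by
  rw [sum_snoc (fun idx => covTens Γ T P idx * ∏ k : Fin (r + 2), V (idx k))]
  have hsummand : ∀ (base : Fin (r + 1) → Fin D) (c : Fin D),
      covTens Γ T P (Fin.snoc base c) * ∏ k : Fin (r + 2),
          V ((Fin.snoc base c : Fin (r + 2) → Fin D) k)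
        = pd c (fun p => T p base) P * ((∏ k, V (base k)) * V c)
          - (∑ k, ∑ s, Γ P s (base k) c * T P (Function.update base k s))
            * ((∏ k, V (base k)) * V c) := by
    intro base c
    rw [covTens_snoc, prod_snoc V base c]
    ring
  rw [Finset.sum_congr rfl fun base _ => Finset.sum_congr rfl fun c _ => hsummand base c]
  rw [Finset.sum_congr rfl fun (base : Fin (r + 1) → Fin D) _ =>
    (Finset.sum_sub_distrib (s := (Finset.univ : Finset (Fin D))) _ _), Finset.sum_sub_distrib]
  congr 1
  · -- pd part
    refine Finset.sum_congr rfl fun base _ => ?_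
    rw [Finset.sum_mul]
    exact Finset.sum_congr rfl fun c _ => by ring
  · -- Γ part
    have hstep1 : ∀ base : Fin (r + 1) → Fin D,
        ∑ c, (∑ k, ∑ s, Γ P s (base k) c * T P (Function.update base k s))
            * ((∏ k, V (base k)) * V c)
          = ∑ k : Fin (r + 1), ∑ s, ∑ c,
              Γ P s (base k) c * T P (Function.update base k s)
                * ((∏ l, V (base l)) * V c) := by
      intro base
      calc ∑ c, (∑ k, ∑ s, Γ P s (base k) c * T P (Function.update base k s))
              * ((∏ k, V (base k)) * V c)
          = ∑ c, ∑ k : Fin (r + 1), ∑ s,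
              Γ P s (base k) c * T P (Function.update base k s)
                * ((∏ l, V (base l)) * V c) := by
            refine Finset.sum_congr rfl fun c _ => ?_
            rw [Finset.sum_mul]
            refine Finset.sum_congr rfl fun k _ => ?_
            rw [Finset.sum_mul]
        _ = ∑ k : Fin (r + 1), ∑ c, ∑ s,
              Γ P s (base k) c * T P (Function.update base k s)
                * ((∏ l, V (base l)) * V c) := Finset.sum_comm
        _ = ∑ k : Fin (r + 1), ∑ s, ∑ c,
              Γ P s (base k) c * T P (Function.update base k s)
                * ((∏ l, V (base l)) * V c) :=
            Finset.sum_congr rfl fun k _ => Finset.sum_comm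
    rw [Finset.sum_congr rfl fun base _ => hstep1 base, Finset.sum_comm]
    rw [show (∑ base : Fin (r + 1) → Fin D, ∑ k : Fin (r + 1),
        T P base * ((∏ l ∈ Finset.univ.erase k, V (base l)) *
          (∑ s, ∑ c, Γ P (base k) s c * V s * V c)))
      = ∑ k : Fin (r + 1), ∑ base : Fin (r + 1) → Fin D,
        T P base * ((∏ l ∈ Finset.univ.erase k, V (base l)) *
          (∑ s, ∑ c, Γ P (base k) s c * V s * V c)) from Finset.sum_comm]
    refine Finset.sum_congr rfl fun k _ => ?_
    rw [sum_update_swap k (fun f s => ∑ c,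
      Γ P s (f k) c * T P (Function.update f k s) * ((∏ l, V (f l)) * V c))]
    refine Finset.sum_congr rfl fun base _ => ?_
    calc ∑ s, ∑ c, Γ P (base k) (Function.update base k s k) c
            * T P (Function.update (Function.update base k s) k (base k))
            * ((∏ l, V (Function.update base k s l)) * V c)
        = ∑ s, ∑ c, Γ P (base k) s c * T P base
            * ((V s * ∏ l ∈ Finset.univ.erase k, V (base l)) * V c) := by
          refine Finset.sum_congr rfl fun s _ => Finset.sum_congr rfl fun c _ => ?_
          rw [Function.update_self, Function.update_idem, Function.update_eq_self,
            prod_comp_update V base k s]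
      _ = T P base * ((∏ l ∈ Finset.univ.erase k, V (base l)) *
            (∑ s, ∑ c, Γ P (base k) s c * V s * V c)) := by
          simp only [Finset.mul_sum]
          refine Finset.sum_congr rfl fun s _ => Finset.sum_congr rfl fun c _ => ?_
          ring

section Helpers6
variable {D : ℕ}

/-- The master pointwise identity for the symmetrized covariant derivative. -/
lemma star_eq {m n : ℕ} (Γ : Conn D) (Q : Vec D → Fin D → ℝ)
    (L : ℕ → (r : ℕ) → Tens D r)
    (hL0 : ∀ N r, r = 0 ∨ m < r ∨ n < N → L N r = fun _ _ => 0)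
    (hKT : ∀ N, N ≤ n → IsGenKT Γ (L N m))
    (hrec : ∀ m₀, m = m₀ + 1 → 1 ≤ m₀ → ∀ k, 1 ≤ k → k ≤ n →
      ∀ q (idx : Fin (m₀ + 1) → Fin D),
        L k (m₀ + 1) q idx = -(1 / (k : ℝ)) * symT (covTens Γ (L (k - 1) m₀)) q idx)
    (hKT' : ∀ m₀, m = m₀ + 1 → 1 ≤ m₀ → IsGenKT Γ (L n m₀))
    (hc2 : ∀ k, k ≤ n → ∀ ρ, 1 ≤ ρ → ρ + 2 ≤ m →
      ∀ q (idx : Fin (ρ + 1) → Fin D),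
        symT (covTens Γ (L k ρ)) q idx =
          ((ρ + 2 : ℕ) : ℝ) * (∑ j, L k (ρ + 2) q (Fin.snoc idx j) * Q q j)
            - ((k + 1 : ℕ) : ℝ) * L (k + 1) (ρ + 1) q idx)
    (P : Vec D) :
    ∀ ρ, 1 ≤ ρ → ρ ≤ m → ∀ N, N ≤ n → ∀ idx : Fin (ρ + 1) → Fin D,
      symT (covTens Γ (L N ρ)) P idx
        = ((ρ + 2 : ℕ) : ℝ) * (∑ j, L N (ρ + 2) P (Fin.snoc idx j) * Q P j)
          - ((N + 1 : ℕ) : ℝ) * L (N + 1) (ρ + 1) P idx := by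
  intro ρ hρ1 hρm N hN idx
  have hLz : ∀ N' r', m < r' → L N' r' = fun _ _ => 0 :=
    fun N' r' h => hL0 N' r' (Or.inr (Or.inl h))
  have hLz' : ∀ r', L (n + 1) r' = fun _ _ => 0 :=
    fun r' => hL0 (n + 1) r' (Or.inr (Or.inr (Nat.lt_succ_self n)))
  by_cases hcase : ρ + 2 ≤ m
  · exact hc2 N hN ρ hρ1 hcase P idx
  · by_cases hcase2 : ρ + 1 = m
    · -- ρ = m − 1
      have hzero3 : ∀ j, L N (ρ + 2) P (Fin.snoc idx j) = 0 := by
        intro j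
        rw [hLz N (ρ + 2) (by omega)]
      rcases Nat.lt_or_ge N n with hNn | hNn
      · have hr := hrec ρ hcase2.symm hρ1 (N + 1) (by omega) (by omega) P idx
        simp only [Nat.add_sub_cancel] at hr
        have hne : ((N : ℝ) + 1) ≠ 0 := by positivity
        have hcast : ((N + 1 : ℕ) : ℝ) = (N : ℝ) + 1 := by push_cast; ring
        rw [hcast] at hr
        rw [Finset.sum_congr rfl fun j _ => by rw [hzero3 j, zero_mul]]
        rw [Finset.sum_const_zero, mul_zero, zero_sub, hcast]
        rw [hr]
        field_simp
      · have hNe : N = n := le_antisymm hN hNn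
        subst hNe
        have h1 : symT (covTens Γ (L N ρ)) P idx = 0 := hKT' ρ hcase2.symm hρ1 P idx
        rw [h1]
        rw [Finset.sum_congr rfl fun j _ => by rw [hzero3 j, zero_mul]]
        rw [Finset.sum_const_zero, mul_zero, zero_sub]
        rw [hLz' (ρ + 1)]
        simp
    · have hρeq : ρ = m := by omega
      subst hρeq
      have h1 : symT (covTens Γ (L N ρ)) P idx = 0 := hKT N hN P idx
      rw [h1]
      rw [Finset.sum_congr rfl fun j _ => by
        rw [show L N (ρ + 2) = fun _ _ => 0 from hLz N (ρ + 2) (by omega)]]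
      rw [show L (N + 1) (ρ + 1) = fun _ _ => 0 from hLz (N + 1) (ρ + 1) (by omega)]
      simp

end Helpers6

section Helpers7
variable {D : ℕ}

lemma nadd11 (r : ℕ) : r + 1 + 1 = r + 2 := rfl
lemma nadd12 (r : ℕ) : r + 1 + 2 = r + 3 := rfl
lemma nadd21 (r : ℕ) : r + 2 + 1 = r + 3 := rfl

/-- `L_{(M) i₁…i_ρ} q̇^{i₁}⋯q̇^{i_ρ}`. -/
def LLc (L : ℕ → (r : ℕ) → Tens D r) (P : Vec D) (V : Fin D → ℝ) (ρ M : ℕ) : ℝ :=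
  ∑ idx : Fin ρ → Fin D, L M ρ P idx * ∏ k : Fin ρ, V (idx k)

/-- `L_{(N) i₁…i_ρ c} Q^c q̇^{i₁}⋯q̇^{i_ρ}`. -/
def QQc (L : ℕ → (r : ℕ) → Tens D r) (Q : Vec D → Fin D → ℝ) (P : Vec D)
    (V : Fin D → ℝ) (ρ N : ℕ) : ℝ :=
  ∑ base : Fin ρ → Fin D, (∑ c, L N (ρ + 1) P (Fin.snoc base c) * Q P c) *
    ∏ i : Fin ρ, V (base i)

def Phic (L : ℕ → (r : ℕ) → Tens D r) (Q : Vec D → Fin D → ℝ) (P : Vec D)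
    (V : Fin D → ℝ) (t : ℝ) (n ρ : ℕ) : ℝ :=
  ((ρ + 1 : ℕ) : ℝ) * ∑ N ∈ Finset.range (n + 1), t ^ N * QQc L Q P V ρ N

def Psic (L : ℕ → (r : ℕ) → Tens D r) (P : Vec D) (V : Fin D → ℝ) (t : ℝ) (n ρ : ℕ) : ℝ :=
  ∑ N ∈ Finset.range (n + 1), t ^ N * ((N + 1 : ℕ) : ℝ) * LLc L P V ρ (N + 1)

/-- The main per-rank computation. -/
lemma EAr_eq {n : ℕ} (Γ : Conn D) (Q : Vec D → Fin D → ℝ)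
    (L : ℕ → (r : ℕ) → Tens D r) (P : Vec D) (V : Fin D → ℝ) (t : ℝ) (r : ℕ)
    (hsym1 : ∀ N, IsSymTens (L N (r + 1)))
    (htop : L (n + 1) (r + 1) = fun _ _ => 0)
    (hstar' : ∀ N, N ≤ n → ∀ idx : Fin (r + 2) → Fin D,
      symT (covTens Γ (L N (r + 1))) P idx
        = ((r + 2 + 1 : ℕ) : ℝ) * (∑ j, L N (r + 2 + 1) P (Fin.snoc idx j) * Q P j)
          - ((N + 1 : ℕ) : ℝ) * L (N + 1) (r + 2) P idx) :
    ∑ idx : Fin (r + 1) → Fin D,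
      ((∑ N ∈ Finset.range (n + 1),
          ((∑ j, pd j (fun p => L N (r + 1) p idx) P * V j) * t ^ N
            + L N (r + 1) P idx * (↑N * t ^ (N - 1)))) *
        ∏ k : Fin (r + 1), V (idx k)
      + (∑ N ∈ Finset.range (n + 1), L N (r + 1) P idx * t ^ N) *
        ∑ k : Fin (r + 1), (∏ l ∈ Finset.univ.erase k, V (idx l)) •
          (-(∑ b', ∑ c', Γ P (idx k) b' c' * V b' * V c') - Q P (idx k)))
    = Psic L P V t n (r + 1) + Phic L Q P V t n (r + 2)
      - Psic L P V t n (r + 2) - Phic L Q P V t n r := by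
  -- Step 1: split into four pieces
  have hsplit : ∑ idx : Fin (r + 1) → Fin D,
      ((∑ N ∈ Finset.range (n + 1),
          ((∑ j, pd j (fun p => L N (r + 1) p idx) P * V j) * t ^ N
            + L N (r + 1) P idx * (↑N * t ^ (N - 1)))) *
        ∏ k : Fin (r + 1), V (idx k)
      + (∑ N ∈ Finset.range (n + 1), L N (r + 1) P idx * t ^ N) *
        ∑ k : Fin (r + 1), (∏ l ∈ Finset.univ.erase k, V (idx l)) •
          (-(∑ b', ∑ c', Γ P (idx k) b' c' * V b' * V c') - Q P (idx k)))
    = (∑ idx : Fin (r + 1) → Fin D,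
        (∑ N ∈ Finset.range (n + 1), L N (r + 1) P idx * (↑N * t ^ (N - 1))) *
          ∏ k : Fin (r + 1), V (idx k))
      + (∑ idx : Fin (r + 1) → Fin D,
        (∑ N ∈ Finset.range (n + 1),
            (∑ j, pd j (fun p => L N (r + 1) p idx) P * V j) * t ^ N) *
          ∏ k : Fin (r + 1), V (idx k))
      - (∑ idx : Fin (r + 1) → Fin D,
        (∑ N ∈ Finset.range (n + 1), L N (r + 1) P idx * t ^ N) *
          ∑ k : Fin (r + 1), (∏ l ∈ Finset.univ.erase k, V (idx l)) *
            (∑ b', ∑ c', Γ P (idx k) b' c' * V b' * V c'))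
      - (∑ idx : Fin (r + 1) → Fin D,
        (∑ N ∈ Finset.range (n + 1), L N (r + 1) P idx * t ^ N) *
          ∑ k : Fin (r + 1), (∏ l ∈ Finset.univ.erase k, V (idx l)) * Q P (idx k)) := by
    rw [← Finset.sum_add_distrib, ← Finset.sum_sub_distrib, ← Finset.sum_sub_distrib]
    refine Finset.sum_congr rfl fun idx _ => ?_
    simp only [smul_eq_mul]
    rw [Finset.sum_add_distrib]
    have hWs : ∑ k : Fin (r + 1), (∏ l ∈ Finset.univ.erase k, V (idx l)) *
        (-(∑ b', ∑ c', Γ P (idx k) b' c' * V b' * V c') - Q P (idx k))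
      = -(∑ k : Fin (r + 1), (∏ l ∈ Finset.univ.erase k, V (idx l)) *
            (∑ b', ∑ c', Γ P (idx k) b' c' * V b' * V c'))
        - ∑ k : Fin (r + 1), (∏ l ∈ Finset.univ.erase k, V (idx l)) * Q P (idx k) := by
      rw [← Finset.sum_neg_distrib, ← Finset.sum_sub_distrib]
      exact Finset.sum_congr rfl fun k _ => by ring
    rw [hWs]
    ring
  rw [hsplit]
  -- T1 = Psic (r+1)
  have hT1 : (∑ idx : Fin (r + 1) → Fin D,
      (∑ N ∈ Finset.range (n + 1), L N (r + 1) P idx * (↑N * t ^ (N - 1))) *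
        ∏ k : Fin (r + 1), V (idx k)) = Psic L P V t n (r + 1) := by
    unfold Psic LLc
    rw [sum_coeff_swap (Finset.range (n + 1)) (fun N idx => L N (r + 1) P idx)
      (fun N => ↑N * t ^ (N - 1)) (fun idx => ∏ k : Fin (r + 1), V (idx k))]
    exact sum_shift_pow n t
      (fun M => ∑ idx : Fin (r + 1) → Fin D, L M (r + 1) P idx * ∏ k : Fin (r + 1), V (idx k))
      (by simp [htop])
  -- T4 = Phic r
  have hT4 : (∑ idx : Fin (r + 1) → Fin D,
      (∑ N ∈ Finset.range (n + 1), L N (r + 1) P idx * t ^ N) *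
        ∑ k : Fin (r + 1), (∏ l ∈ Finset.univ.erase k, V (idx l)) * Q P (idx k))
      = Phic L Q P V t n r := by
    unfold Phic QQc
    rw [sum_coeff_swap (Finset.range (n + 1)) (fun N idx => L N (r + 1) P idx)
      (fun N => t ^ N) (fun idx => ∑ k : Fin (r + 1),
        (∏ l ∈ Finset.univ.erase k, V (idx l)) * Q P (idx k))]
    rw [Finset.mul_sum]
    refine Finset.sum_congr rfl fun N _ => ?_
    have hinner : ∑ idx : Fin (r + 1) → Fin D, L N (r + 1) P idx *
        ∑ k : Fin (r + 1), (∏ l ∈ Finset.univ.erase k, V (idx l)) * Q P (idx k)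
      = ∑ idx : Fin (r + 1) → Fin D, ∑ k : Fin (r + 1),
          L N (r + 1) P idx * ((∏ l ∈ Finset.univ.erase k, V (idx l)) * Q P (idx k)) :=
      Finset.sum_congr rfl fun idx _ => Finset.mul_sum _ _ _
    rw [hinner, contractQ (L N (r + 1)) (hsym1 N) P (Q P) V]
    ring
  -- the covariant-derivative contraction
  have hcov2 : ∀ N, N ≤ n →
      ∑ idx : Fin (r + 2) → Fin D, covTens Γ (L N (r + 1)) P idx *
          ∏ k : Fin (r + 2), V (idx k)
        = ((r + 2 + 1 : ℕ) : ℝ) * QQc L Q P V (r + 2) N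
          - ((N + 1 : ℕ) : ℝ) * LLc L P V (r + 2) (N + 1) := by
    intro N hN
    rw [← sum_symT_contract (covTens Γ (L N (r + 1))) P V]
    rw [Finset.sum_congr rfl fun idx _ => by rw [hstar' N hN idx]]
    unfold QQc LLc
    have hexp : ∀ idx : Fin (r + 2) → Fin D,
        (((r + 2 + 1 : ℕ) : ℝ) * (∑ j, L N (r + 2 + 1) P (Fin.snoc idx j) * Q P j)
            - ((N + 1 : ℕ) : ℝ) * L (N + 1) (r + 2) P idx) * ∏ k : Fin (r + 2), V (idx k)
          = ((r + 2 + 1 : ℕ) : ℝ) * ((∑ j, L N (r + 2 + 1) P (Fin.snoc idx j) * Q P j) *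
              ∏ k : Fin (r + 2), V (idx k))
            - ((N + 1 : ℕ) : ℝ) * (L (N + 1) (r + 2) P idx * ∏ k : Fin (r + 2), V (idx k)) :=
      fun idx => by ring
    rw [Finset.sum_congr rfl fun idx _ => hexp idx, Finset.sum_sub_distrib,
      ← Finset.mul_sum, ← Finset.mul_sum]
  -- T2 - T3
  have hT23 : (∑ idx : Fin (r + 1) → Fin D,
        (∑ N ∈ Finset.range (n + 1),
            (∑ j, pd j (fun p => L N (r + 1) p idx) P * V j) * t ^ N) *
          ∏ k : Fin (r + 1), V (idx k))
      - (∑ idx : Fin (r + 1) → Fin D,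
        (∑ N ∈ Finset.range (n + 1), L N (r + 1) P idx * t ^ N) *
          ∑ k : Fin (r + 1), (∏ l ∈ Finset.univ.erase k, V (idx l)) *
            (∑ b', ∑ c', Γ P (idx k) b' c' * V b' * V c'))
      = Phic L Q P V t n (r + 2) - Psic L P V t n (r + 2) := by
    rw [sum_coeff_swap (Finset.range (n + 1))
      (fun N idx => ∑ j, pd j (fun p => L N (r + 1) p idx) P * V j)
      (fun N => t ^ N) (fun idx => ∏ k : Fin (r + 1), V (idx k))]
    rw [sum_coeff_swap (Finset.range (n + 1)) (fun N idx => L N (r + 1) P idx)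
      (fun N => t ^ N) (fun idx => ∑ k : Fin (r + 1),
        (∏ l ∈ Finset.univ.erase k, V (idx l)) *
          (∑ b', ∑ c', Γ P (idx k) b' c' * V b' * V c'))]
    rw [← Finset.sum_sub_distrib]
    have hperN : ∀ N ∈ Finset.range (n + 1),
        t ^ N * (∑ idx : Fin (r + 1) → Fin D,
            (∑ j, pd j (fun p => L N (r + 1) p idx) P * V j) *
              ∏ k : Fin (r + 1), V (idx k))
          - t ^ N * (∑ idx : Fin (r + 1) → Fin D, L N (r + 1) P idx *
              ∑ k : Fin (r + 1), (∏ l ∈ Finset.univ.erase k, V (idx l)) *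
                (∑ b', ∑ c', Γ P (idx k) b' c' * V b' * V c'))
        = t ^ N * (((r + 2 + 1 : ℕ) : ℝ) * QQc L Q P V (r + 2) N)
          - t ^ N * (((N + 1 : ℕ) : ℝ) * LLc L P V (r + 2) (N + 1)) := by
      intro N hNmem
      have hN : N ≤ n := by
        have := Finset.mem_range.1 hNmem
        omega
      have hGM : ∑ idx : Fin (r + 1) → Fin D, L N (r + 1) P idx *
            ∑ k : Fin (r + 1), (∏ l ∈ Finset.univ.erase k, V (idx l)) *
              (∑ b', ∑ c', Γ P (idx k) b' c' * V b' * V c')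
          = ∑ idx : Fin (r + 1) → Fin D, ∑ k : Fin (r + 1),
              L N (r + 1) P idx * ((∏ l ∈ Finset.univ.erase k, V (idx l)) *
                (∑ b', ∑ c', Γ P (idx k) b' c' * V b' * V c')) :=
        Finset.sum_congr rfl fun idx _ => Finset.mul_sum _ _ _
      rw [hGM, ← mul_sub, ← mul_sub, ← covSum_eq Γ (L N (r + 1)) (hsym1 N) P V,
        hcov2 N hN]
    rw [Finset.sum_congr rfl hperN, Finset.sum_sub_distrib]
    unfold Phic Psic
    congr 1
    · rw [Finset.mul_sum]
      exact Finset.sum_congr rfl fun N _ => by ring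
    · exact Finset.sum_congr rfl fun N _ => by ring
  rw [hT1, hT4]
  have hfin := hT23
  linarith [hfin]

end Helpers7

section Helpers8
variable {D : ℕ}

lemma EA_sum_eq {m n : ℕ} (Γ : Conn D) (Q : Vec D → Fin D → ℝ)
    (L : ℕ → (r : ℕ) → Tens D r) (P : Vec D) (V : Fin D → ℝ) (t : ℝ)
    (hLsym : ∀ N r, IsSymTens (L N r))
    (hL0 : ∀ N r, r = 0 ∨ m < r ∨ n < N → L N r = fun _ _ => 0)
    (hstar : ∀ r, r < m → ∀ N, N ≤ n → ∀ idx : Fin (r + 2) → Fin D,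
      symT (covTens Γ (L N (r + 1))) P idx
        = ((r + 2 + 1 : ℕ) : ℝ) * (∑ j, L N (r + 2 + 1) P (Fin.snoc idx j) * Q P j)
          - ((N + 1 : ℕ) : ℝ) * L (N + 1) (r + 2) P idx) :
    ∑ r ∈ Finset.range m, ∑ idx : Fin (r + 1) → Fin D,
      ((∑ N ∈ Finset.range (n + 1),
          ((∑ j, pd j (fun p => L N (r + 1) p idx) P * V j) * t ^ N
            + L N (r + 1) P idx * (↑N * t ^ (N - 1)))) *
        ∏ k : Fin (r + 1), V (idx k)
      + (∑ N ∈ Finset.range (n + 1), L N (r + 1) P idx * t ^ N) *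
        ∑ k : Fin (r + 1), (∏ l ∈ Finset.univ.erase k, V (idx l)) •
          (-(∑ b', ∑ c', Γ P (idx k) b' c' * V b' * V c') - Q P (idx k)))
    = Psic L P V t n 1 - Phic L Q P V t n 0 - Phic L Q P V t n 1 := by
  have hLLz : ∀ M, LLc L P V (m + 1) M = 0 := by
    intro M
    unfold LLc
    rw [hL0 M (m + 1) (Or.inr (Or.inl (Nat.lt_succ_self m)))]
    simp
  have hQQz : ∀ ρ N, m < ρ + 1 → QQc L Q P V ρ N = 0 := by
    intro ρ N h
    unfold QQc
    rw [hL0 N (ρ + 1) (Or.inr (Or.inl h))]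
    simp
  have hPsitop : Psic L P V t n (m + 1) = 0 := by
    unfold Psic
    refine Finset.sum_eq_zero fun N _ => ?_
    rw [hLLz (N + 1), mul_zero]
  have hPhim : Phic L Q P V t n m = 0 := by
    unfold Phic
    rw [Finset.sum_eq_zero fun N _ => by rw [hQQz m N (Nat.lt_succ_self m), mul_zero]]
    ring
  have hPhim1 : Phic L Q P V t n (m + 1) = 0 := by
    unfold Phic
    rw [Finset.sum_eq_zero fun N _ => by rw [hQQz (m + 1) N (by omega), mul_zero]]
    ring
  rw [Finset.sum_congr rfl fun r hr => EAr_eq Γ Q L P V t r (fun N => hLsym N (r + 1))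
    (hL0 (n + 1) (r + 1) (Or.inr (Or.inr (Nat.lt_succ_self n))))
    (hstar r (Finset.mem_range.1 hr))]
  have h1 : ∑ r ∈ Finset.range m,
      (Psic L P V t n (r + 1) + Phic L Q P V t n (r + 2)
        - Psic L P V t n (r + 2) - Phic L Q P V t n r)
    = (∑ r ∈ Finset.range m, (Psic L P V t n (r + 1) - Psic L P V t n (r + 2)))
      + ∑ r ∈ Finset.range m, (Phic L Q P V t n (r + 2) - Phic L Q P V t n r) := by
    rw [← Finset.sum_add_distrib]
    exact Finset.sum_congr rfl fun r _ => by ring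
  have h2 : ∑ r ∈ Finset.range m, (Psic L P V t n (r + 1) - Psic L P V t n (r + 2))
      = Psic L P V t n 1 - Psic L P V t n (m + 1) := by
    have h := Finset.sum_range_sub' (fun r => Psic L P V t n (r + 1)) m
    exact h
  have h3 : ∑ r ∈ Finset.range m, (Phic L Q P V t n (r + 2) - Phic L Q P V t n r)
      = Phic L Q P V t n m + Phic L Q P V t n (m + 1)
        - Phic L Q P V t n 0 - Phic L Q P V t n 1 := by
    rw [Finset.sum_sub_distrib]
    have h := sum_range_shift2 (fun r => Phic L Q P V t n r) m
    linarith
  rw [h1, h2, h3, hPsitop, hPhim, hPhim1]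
  ring

end Helpers8

section Helpers9
variable {D : ℕ}

lemma QQc_zero (L : ℕ → (r : ℕ) → Tens D r) (Q : Vec D → Fin D → ℝ) (P : Vec D)
    (V : Fin D → ℝ) (N : ℕ) : QQc L Q P V 0 N = dotQ (L N 1) Q P := by
  unfold QQc dotQ
  rw [sum_fun_zero (fun base : Fin 0 → Fin D =>
    (∑ c, L N (0 + 1) P (Fin.snoc base c) * Q P c) * ∏ i : Fin 0, V (base i))]
  simp only [Finset.univ_eq_empty, Finset.prod_empty, mul_one]
  refine Finset.sum_congr rfl fun c _ => ?_
  rw [snoc_zero]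

lemma QQc_one (L : ℕ → (r : ℕ) → Tens D r) (Q : Vec D → Fin D → ℝ) (P : Vec D)
    (V : Fin D → ℝ) (N : ℕ) :
    QQc L Q P V 1 N = ∑ i, (∑ j, L N 2 P ![i, j] * Q P j) * V i := by
  unfold QQc
  rw [sum_fun_one (fun base : Fin 1 → Fin D =>
    (∑ c, L N (1 + 1) P (Fin.snoc base c) * Q P c) * ∏ i : Fin 1, V (base i))]
  refine Finset.sum_congr rfl fun i _ => ?_
  rw [Fin.prod_univ_one]
  refine congrArg (· * V i) ?_
  refine Finset.sum_congr rfl fun j _ => ?_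
  rw [snoc_pair]

lemma LLc_one (L : ℕ → (r : ℕ) → Tens D r) (P : Vec D) (V : Fin D → ℝ) (M : ℕ) :
    LLc L P V 1 M = ∑ i, L M 1 P (fun _ => i) * V i := by
  unfold LLc
  rw [sum_fun_one (fun idx : Fin 1 → Fin D => L M 1 P idx * ∏ k : Fin 1, V (idx k))]
  refine Finset.sum_congr rfl fun i _ => ?_
  rw [Fin.prod_univ_one]

lemma Phic_zero {n : ℕ} (L : ℕ → (r : ℕ) → Tens D r) (Q : Vec D → Fin D → ℝ) (P : Vec D)
    (V : Fin D → ℝ) (t : ℝ) :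
    Phic L Q P V t n 0 = ∑ N ∈ Finset.range (n + 1), t ^ N * dotQ (L N 1) Q P := by
  unfold Phic
  rw [Finset.sum_congr rfl fun N _ => by rw [QQc_zero]]
  norm_num

lemma Phic_one {n : ℕ} (L : ℕ → (r : ℕ) → Tens D r) (Q : Vec D → Fin D → ℝ) (P : Vec D)
    (V : Fin D → ℝ) (t : ℝ) :
    Phic L Q P V t n 1
      = 2 * ∑ N ∈ Finset.range (n + 1), t ^ N * ∑ i, (∑ j, L N 2 P ![i, j] * Q P j) * V i := by
  unfold Phic
  rw [Finset.sum_congr rfl fun N _ => by rw [QQc_one]]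
  norm_num

lemma Psic_one {n : ℕ} (L : ℕ → (r : ℕ) → Tens D r) (P : Vec D) (V : Fin D → ℝ) (t : ℝ) :
    Psic L P V t n 1 = ∑ N ∈ Finset.range (n + 1),
      t ^ N * ((N + 1 : ℕ) : ℝ) * ∑ i, L (N + 1) 1 P (fun _ => i) * V i := by
  unfold Psic
  exact Finset.sum_congr rfl fun N _ => by rw [LLc_one]

end Helpers9

/-- Theorem 1, Integral 1. The family `L N r` represents the
totally symmetric tensors `L_{(N)i₁...i_r}`; components outside the admissible
range (`r = 0`, `r > m` or `N > n`) are absent, i.e. vanish, which encodes all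
the "present only if" conventions of the theorem. -/
theorem stmt1 {D m n : ℕ} (hm : 1 ≤ m)
    (Γ : Conn D) (Q : Vec D → Fin D → ℝ)
    (hΓsym : ∀ q a b c, Γ q a b c = Γ q a c b)
    (hΓ : ∀ a b c, ContDiff ℝ (⊤ : ℕ∞) fun q => Γ q a b c)
    (hQ : ∀ a, ContDiff ℝ (⊤ : ℕ∞) fun q => Q q a)
    (L : ℕ → (r : ℕ) → Tens D r) (G : Vec D → ℝ) (s₀ : ℝ)
    (hLsm : ∀ N r, SmoothTens (L N r))
    (hLsym : ∀ N r, IsSymTens (L N r))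
    (hG : ContDiff ℝ (⊤ : ℕ∞) G)
    (hL0 : ∀ N r, r = 0 ∨ m < r ∨ n < N → L N r = fun _ _ => 0)
    -- (i) the `L_{(N)i₁...i_m}`, `N = 0,…,n`, are m-th order generalized KTs
    (hKT : ∀ N, N ≤ n → IsGenKT Γ (L N m))
    -- (ii) for `m > 1`, `n > 0`: `L_{(k)i₁...i_m} = −(1/k) L_{(k−1)(i₁...i_{m−1}|i_m)}`
    (hrec : ∀ m₀, m = m₀ + 1 → 1 ≤ m₀ → ∀ k, 1 ≤ k → k ≤ n →
      ∀ q (idx : Fin (m₀ + 1) → Fin D),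
        L k (m₀ + 1) q idx = -(1 / (k : ℝ)) * symT (covTens Γ (L (k - 1) m₀)) q idx)
    -- (iii) for `m > 1`, `L_{(n)i₁...i_{m−1}}` is an (m−1)-th order generalized KT
    (hKT' : ∀ m₀, m = m₀ + 1 → 1 ≤ m₀ → IsGenKT Γ (L n m₀))
    -- (iv) `L_{(n)a} Q^a = s₀` is a constant
    (hs₀ : ∀ q, dotQ (L n 1) Q q = s₀)
    -- (v) `G_{,i₁} = 2 L_{(0)i₁i₂} Q^{i₂} − L_{(1)i₁}`
    (hGc : ∀ q (i : Fin D),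
      pd i G q = 2 * (∑ j, L 0 2 q ![i, j] * Q q j) - L 1 1 q fun _ => i)
    -- (vi) `(L_{(k−1)c}Q^c)_{,i₁} = 2k L_{(k)i₁i₂}Q^{i₂} − k(k+1) L_{(k+1)i₁}`, k = 1,…,n
    (hc1 : ∀ k, 1 ≤ k → k ≤ n → ∀ q (i : Fin D),
      pd i (dotQ (L (k - 1) 1) Q) q =
        2 * (k : ℝ) * (∑ j, L k 2 q ![i, j] * Q q j)
          - (k : ℝ) * ((k : ℝ) + 1) * L (k + 1) 1 q fun _ => i)
    -- (vii) for `k = 0,…,n` and ranks `r = ρ+1 = 2,…,m−1`: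
    -- `L_{(k)(i₁...i_{r−1}|i_r)} = (r+1) L_{(k)i₁...i_{r+1}} Q^{i_{r+1}} − (k+1) L_{(k+1)i₁...i_r}`
    (hc2 : ∀ k, k ≤ n → ∀ ρ, 1 ≤ ρ → ρ + 2 ≤ m →
      ∀ q (idx : Fin (ρ + 1) → Fin D),
        symT (covTens Γ (L k ρ)) q idx =
          ((ρ + 2 : ℕ) : ℝ) * (∑ j, L k (ρ + 2) q (Fin.snoc idx j) * Q q j)
            - ((k + 1 : ℕ) : ℝ) * L (k + 1) (ρ + 1) q idx) :
    FirstIntegral Γ Q (fun t q v =>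
      (∑ r ∈ Finset.range m, ∑ idx : Fin (r + 1) → Fin D,
        (∑ N ∈ Finset.range (n + 1), L N (r + 1) q idx * t ^ N) *
          ∏ k : Fin (r + 1), v (idx k))
      + s₀ * t ^ (n + 1) / ((n + 1 : ℕ) : ℝ)
      + (∑ N ∈ Finset.range n, dotQ (L N 1) Q q * t ^ (N + 1) / ((N + 1 : ℕ) : ℝ))
      + G q) := by
  intro a b q v hsol t₁ ht₁ t₂ ht₂
  set F : ℝ → ℝ := fun τ =>
    (∑ r ∈ Finset.range m, ∑ idx : Fin (r + 1) → Fin D,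
      (∑ N ∈ Finset.range (n + 1), L N (r + 1) (q τ) idx * τ ^ N) *
        ∏ k : Fin (r + 1), v τ (idx k))
    + s₀ * τ ^ (n + 1) / ((n + 1 : ℕ) : ℝ)
    + (∑ N ∈ Finset.range n, dotQ (L N 1) Q (q τ) * τ ^ (N + 1) / ((N + 1 : ℕ) : ℝ))
    + G (q τ) with hFdef
  show F t₁ = F t₂
  have hdotQsm : ∀ N : ℕ, ContDiff ℝ (⊤ : ℕ∞) (dotQ (L N 1) Q) := by
    intro N
    unfold dotQ
    exact ContDiff.sum fun c _ => (hLsm N 1 fun _ => c).mul (hQ c)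
  have key : ∀ t ∈ Set.Ioo a b, HasDerivAt F 0 t := by
    intro t ht
    have hq : ∀ a', HasDerivAt (fun τ => q τ a') (v t a') t := fun a' => (hsol t ht a').1
    have hv : ∀ a', HasDerivAt (fun τ => v τ a')
        (-(∑ b', ∑ c', Γ (q t) a' b' c' * v t b' * v t c') - Q (q t) a') t :=
      fun a' => (hsol t ht a').2
    have hDA : HasDerivAt (fun τ =>
        ∑ r ∈ Finset.range m, ∑ idx : Fin (r + 1) → Fin D,
          (∑ N ∈ Finset.range (n + 1), L N (r + 1) (q τ) idx * τ ^ N) *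
            ∏ k : Fin (r + 1), v τ (idx k))
        (∑ r ∈ Finset.range m, ∑ idx : Fin (r + 1) → Fin D,
          ((∑ N ∈ Finset.range (n + 1),
              ((∑ j, pd j (fun p => L N (r + 1) p idx) (q t) * v t j) * t ^ N
                + L N (r + 1) (q t) idx * (↑N * t ^ (N - 1)))) *
            ∏ k : Fin (r + 1), v t (idx k)
          + (∑ N ∈ Finset.range (n + 1), L N (r + 1) (q t) idx * t ^ N) *
            ∑ k : Fin (r + 1), (∏ l ∈ Finset.univ.erase k, v t (idx l)) •
              (-(∑ b', ∑ c', Γ (q t) (idx k) b' c' * v t b' * v t c') - Q (q t) (idx k)))) t := by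
      refine HasDerivAt.fun_sum fun r _ => HasDerivAt.fun_sum fun idx _ => HasDerivAt.mul ?_ ?_
      · exact HasDerivAt.fun_sum fun N _ =>
          (hasDerivAt_comp_vec _ (hLsm N (r + 1) idx) hq).mul (hasDerivAt_pow N t)
      · exact HasDerivAt.fun_finset_prod fun k _ => hv (idx k)
    have hDB : HasDerivAt (fun τ => s₀ * τ ^ (n + 1) / ((n + 1 : ℕ) : ℝ))
        (s₀ * (↑(n + 1) * t ^ n) / ((n + 1 : ℕ) : ℝ)) t :=
      ((hasDerivAt_pow (n + 1) t).const_mul s₀).div_const _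
    have hDC : HasDerivAt
        (fun τ => ∑ N ∈ Finset.range n, dotQ (L N 1) Q (q τ) * τ ^ (N + 1) / ((N + 1 : ℕ) : ℝ))
        (∑ N ∈ Finset.range n,
          ((∑ j, pd j (dotQ (L N 1) Q) (q t) * v t j) * t ^ (N + 1)
            + dotQ (L N 1) Q (q t) * (↑(N + 1) * t ^ N)) / ((N + 1 : ℕ) : ℝ)) t :=
      HasDerivAt.fun_sum fun N _ =>
        ((hasDerivAt_comp_vec _ (hdotQsm N) hq).mul (hasDerivAt_pow (N + 1) t)).div_const _
    have hDG : HasDerivAt (fun τ => G (q τ)) (∑ j, pd j G (q t) * v t j) t :=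
      hasDerivAt_comp_vec G hG hq
    have hcomb := ((hDA.add hDB).add hDC).add hDG
    have hE : (∑ r ∈ Finset.range m, ∑ idx : Fin (r + 1) → Fin D,
          ((∑ N ∈ Finset.range (n + 1),
              ((∑ j, pd j (fun p => L N (r + 1) p idx) (q t) * v t j) * t ^ N
                + L N (r + 1) (q t) idx * (↑N * t ^ (N - 1)))) *
            ∏ k : Fin (r + 1), v t (idx k)
          + (∑ N ∈ Finset.range (n + 1), L N (r + 1) (q t) idx * t ^ N) *
            ∑ k : Fin (r + 1), (∏ l ∈ Finset.univ.erase k, v t (idx l)) •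
              (-(∑ b', ∑ c', Γ (q t) (idx k) b' c' * v t b' * v t c') - Q (q t) (idx k)))
        + s₀ * (↑(n + 1) * t ^ n) / ((n + 1 : ℕ) : ℝ)
        + ∑ N ∈ Finset.range n,
          ((∑ j, pd j (dotQ (L N 1) Q) (q t) * v t j) * t ^ (N + 1)
            + dotQ (L N 1) Q (q t) * (↑(N + 1) * t ^ N)) / ((N + 1 : ℕ) : ℝ)
        + ∑ j, pd j G (q t) * v t j) = 0 := by
      have hstar' : ∀ r, r < m → ∀ N, N ≤ n → ∀ idx : Fin (r + 2) → Fin D,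
          symT (covTens Γ (L N (r + 1))) (q t) idx
            = ((r + 2 + 1 : ℕ) : ℝ) *
                (∑ j, L N (r + 2 + 1) (q t) (Fin.snoc idx j) * Q (q t) j)
              - ((N + 1 : ℕ) : ℝ) * L (N + 1) (r + 2) (q t) idx := by
        intro r hr N hN idx
        exact star_eq Γ Q L hL0 hKT hrec hKT' hc2 (q t) (r + 1) (by omega) (by omega) N hN idx
      have hEA := EA_sum_eq Γ Q L (q t) (v t) t hLsym hL0 hstar'
      rw [hEA, Phic_zero, Phic_one, Psic_one]
      have hne : ((n + 1 : ℕ) : ℝ) ≠ 0 := by positivity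
      have hEB : s₀ * (((n + 1 : ℕ) : ℝ) * t ^ n) / ((n + 1 : ℕ) : ℝ) = s₀ * t ^ n := by
        field_simp
      rw [hEB]
      have hEG : ∑ j, pd j G (q t) * v t j
          = 2 * (∑ i, (∑ j, L 0 2 (q t) ![i, j] * Q (q t) j) * v t i)
            - ∑ i, L 1 1 (q t) (fun _ => i) * v t i := by
        rw [Finset.sum_congr rfl fun i (_ : i ∈ Finset.univ) => by rw [hGc (q t) i]]
        rw [Finset.sum_congr rfl fun i (_ : i ∈ Finset.univ) =>
          (by ring : (2 * (∑ j, L 0 2 (q t) ![i, j] * Q (q t) j)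
              - L 1 1 (q t) (fun _ => i)) * v t i
            = 2 * ((∑ j, L 0 2 (q t) ![i, j] * Q (q t) j) * v t i)
              - L 1 1 (q t) (fun _ => i) * v t i)]
        rw [Finset.sum_sub_distrib, ← Finset.mul_sum]
      rw [hEG]
      have hEC : (∑ N ∈ Finset.range n,
            ((∑ j, pd j (dotQ (L N 1) Q) (q t) * v t j) * t ^ (N + 1)
              + dotQ (L N 1) Q (q t) * (↑(N + 1) * t ^ N)) / ((N + 1 : ℕ) : ℝ))
          = ∑ N ∈ Finset.range n,
              (2 * (t ^ (N + 1) * ∑ i, (∑ j, L (N + 1) 2 (q t) ![i, j] * Q (q t) j) * v t i)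
                - t ^ (N + 1) * ((N + 2 : ℕ) : ℝ) *
                    (∑ i, L (N + 2) 1 (q t) (fun _ => i) * v t i)
                + dotQ (L N 1) Q (q t) * t ^ N) := by
        refine Finset.sum_congr rfl fun N hNmem => ?_
        have hNn : N + 1 ≤ n := by
          have := Finset.mem_range.1 hNmem
          omega
        have hpd : ∀ j : Fin D, pd j (dotQ (L N 1) Q) (q t)
            = 2 * ((N + 1 : ℕ) : ℝ) * (∑ j', L (N + 1) 2 (q t) ![j, j'] * Q (q t) j')
              - ((N + 1 : ℕ) : ℝ) * (((N + 1 : ℕ) : ℝ) + 1) *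
                  L (N + 2) 1 (q t) (fun _ => j) :=
          fun j => hc1 (N + 1) (by omega) hNn (q t) j
        have hsum : ∑ j, pd j (dotQ (L N 1) Q) (q t) * v t j
            = 2 * ((N + 1 : ℕ) : ℝ) *
                  (∑ i, (∑ j, L (N + 1) 2 (q t) ![i, j] * Q (q t) j) * v t i)
                - ((N + 1 : ℕ) : ℝ) * (((N + 1 : ℕ) : ℝ) + 1) *
                    (∑ i, L (N + 2) 1 (q t) (fun _ => i) * v t i) := by
          rw [Finset.sum_congr rfl fun i (_ : i ∈ Finset.univ) => by rw [hpd i]]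
          rw [Finset.sum_congr rfl fun i (_ : i ∈ Finset.univ) =>
            (by ring : (2 * ((N + 1 : ℕ) : ℝ) *
                  (∑ j', L (N + 1) 2 (q t) ![i, j'] * Q (q t) j')
                - ((N + 1 : ℕ) : ℝ) * (((N + 1 : ℕ) : ℝ) + 1) *
                    L (N + 2) 1 (q t) (fun _ => i)) * v t i
              = 2 * ((N + 1 : ℕ) : ℝ) *
                  ((∑ j', L (N + 1) 2 (q t) ![i, j'] * Q (q t) j') * v t i)
                - ((N + 1 : ℕ) : ℝ) * (((N + 1 : ℕ) : ℝ) + 1) *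
                    (L (N + 2) 1 (q t) (fun _ => i) * v t i))]
          rw [Finset.sum_sub_distrib, ← Finset.mul_sum, ← Finset.mul_sum]
        rw [hsum]
        have hne' : ((N + 1 : ℕ) : ℝ) ≠ 0 := by positivity
        field_simp
        push_cast
        ring
      rw [hEC]
      have i1 : ∑ N ∈ Finset.range (n + 1),
            t ^ N * ((N + 1 : ℕ) : ℝ) * ∑ i, L (N + 1) 1 (q t) (fun _ => i) * v t i
          = (∑ i, L 1 1 (q t) (fun _ => i) * v t i)
            + ∑ N ∈ Finset.range n, t ^ (N + 1) * ((N + 2 : ℕ) : ℝ) *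
                (∑ i, L (N + 2) 1 (q t) (fun _ => i) * v t i) := by
        rw [Finset.sum_range_succ' (fun N =>
          t ^ N * ((N + 1 : ℕ) : ℝ) * ∑ i, L (N + 1) 1 (q t) (fun _ => i) * v t i) n]
        rw [add_comm]
        congr 1 <;> norm_num
      have i2 : ∑ N ∈ Finset.range (n + 1), t ^ N * dotQ (L N 1) Q (q t)
          = (∑ N ∈ Finset.range n, dotQ (L N 1) Q (q t) * t ^ N) + s₀ * t ^ n := by
        rw [Finset.sum_range_succ, hs₀ (q t)]
        rw [Finset.sum_congr rfl fun N (_ : N ∈ Finset.range n) =>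
          mul_comm (t ^ N) (dotQ (L N 1) Q (q t))]
        ring
      have i3 : ∑ N ∈ Finset.range (n + 1),
            t ^ N * ∑ i, (∑ j, L N 2 (q t) ![i, j] * Q (q t) j) * v t i
          = (∑ i, (∑ j, L 0 2 (q t) ![i, j] * Q (q t) j) * v t i)
            + ∑ N ∈ Finset.range n, t ^ (N + 1) *
                ∑ i, (∑ j, L (N + 1) 2 (q t) ![i, j] * Q (q t) j) * v t i := by
        rw [Finset.sum_range_succ' (fun N =>
          t ^ N * ∑ i, (∑ j, L N 2 (q t) ![i, j] * Q (q t) j) * v t i) n]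
        rw [add_comm]
        congr 1 <;> norm_num
      have iEC : ∑ N ∈ Finset.range n,
            (2 * (t ^ (N + 1) * ∑ i, (∑ j, L (N + 1) 2 (q t) ![i, j] * Q (q t) j) * v t i)
              - t ^ (N + 1) * ((N + 2 : ℕ) : ℝ) *
                  (∑ i, L (N + 2) 1 (q t) (fun _ => i) * v t i)
              + dotQ (L N 1) Q (q t) * t ^ N)
          = 2 * (∑ N ∈ Finset.range n, t ^ (N + 1) *
                ∑ i, (∑ j, L (N + 1) 2 (q t) ![i, j] * Q (q t) j) * v t i)
            - (∑ N ∈ Finset.range n, t ^ (N + 1) * ((N + 2 : ℕ) : ℝ) *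
                (∑ i, L (N + 2) 1 (q t) (fun _ => i) * v t i))
            + ∑ N ∈ Finset.range n, dotQ (L N 1) Q (q t) * t ^ N := by
        rw [Finset.sum_add_distrib, Finset.sum_sub_distrib, ← Finset.mul_sum]
      rw [iEC, i1, i2, i3]
      ring
    rw [hE] at hcomb
    exact hcomb
  have hdiff : DifferentiableOn ℝ F (Set.Ioo a b) := fun x hx =>
    ((key x hx).differentiableAt).differentiableWithinAt
  have hfd : ∀ x ∈ Set.Ioo a b, fderivWithin ℝ F (Set.Ioo a b) x = 0 := by
    intro x hx
    rw [fderivWithin_of_isOpen isOpen_Ioo hx, (key x hx).hasFDerivAt.fderiv]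
    ext
    simp
  exact (convex_Ioo a b).is_const_of_fderivWithin_eq_zero hdiff hfd ht₁ ht₂
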